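/- Let F be a finite field, and fix pairwise distinct β₁,…,β_{K+T} ∈ F and pairwise distinct α₁,…,α_N ∈ F disjoint from the β's. For each of two secrets h, h' ∈ F^K, the distribution of the share vector (φ(α_n))_{n∈S} for any fixed S ⊆ [N] with |S| ≤ T is identical, where φ is the degree-(K+T-1) Lagrange encoding of the secret padded with T i.i.d. uniform noise symbols at β_{K+1},…,β_{K+T}. Consequently the mutual information I(h ; (φ(α_n))_{n∈S}) = 0 when h is any random secret. -/

import Mathlib

open Polynomial

private lemma uniform_map_equiv {A : Type*} [Fintype A] [Nonempty A] (e : A ≃ A) :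
    (PMF.uniformOfFintype A).map e = PMF.uniformOfFintype A := by
  classical
  ext b
  rw [PMF.map_apply]
  have h0 : ∀ a : A, a ≠ e.symm b → (if b = e a then (PMF.uniformOfFintype A) a else 0) = 0 := by
    intro a ha
    rw [if_neg]
    intro hba
    exact ha (by simp [hba])
  rw [tsum_eq_single (e.symm b) h0]
  simp

theorem stmt14 {F : Type*} [Field F] [Fintype F] [DecidableEq F]
    (K T N : ℕ) (hK : 0 < K) (hT : 0 < T)
    (β : Fin (K + T) → F) (α : Fin N → F)
    (hdist : Function.Injective (Fin.append β α))
    (S : Finset (Fin N)) (hS : S.card ≤ T) :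
    (∀ h h' : Fin K → F,
      (PMF.uniformOfFintype (Fin T → F)).map
          (fun z => fun n : S =>
            Polynomial.eval (α n)
              (Lagrange.interpolate Finset.univ β (Fin.append h z)))
        = (PMF.uniformOfFintype (Fin T → F)).map
            (fun z => fun n : S =>
              Polynomial.eval (α n)
                (Lagrange.interpolate Finset.univ β (Fin.append h' z)))) ∧
    (∀ κ : PMF (Fin K → F),
      ∃ ν : PMF (S → F),
        (κ.bind fun h =>
          ((PMF.uniformOfFintype (Fin T → F)).map
            (fun z => fun n : S =>
              Polynomial.eval (α n)
                (Lagrange.interpolate Finset.univ β (Fin.append h z)))).map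
            (fun y => (h, y)))
          = κ.bind fun h => ν.map (fun y => (h, y))) := by
  classical
  have hβ : Function.Injective β := by
    intro i j hij
    have h1 : Fin.append β α (Fin.castAdd N i) = Fin.append β α (Fin.castAdd N j) := by
      simpa [Fin.append_left] using hij
    have := congrArg Fin.val (hdist h1)
    simpa [Fin.ext_iff] using this
  have hα : Function.Injective α := by
    intro i j hij
    have h1 : Fin.append β α (Fin.natAdd (K+T) i) = Fin.append β α (Fin.natAdd (K+T) j) := by
      simpa [Fin.append_right] using hij
    have := congrArg Fin.val (hdist h1)
    simpa [Fin.ext_iff] using this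
  have hβα : ∀ i n, β i ≠ α n := by
    intro i n h
    have h1 : Fin.append β α (Fin.castAdd N i) = Fin.append β α (Fin.natAdd (K+T) n) := by
      simpa [Fin.append_left, Fin.append_right] using h
    have := congrArg Fin.val (hdist h1)
    simp at this
    omega
  -- index type for the correction polynomial
  have hv : ∀ (v : Fin K ⊕ S → F), v = Sum.elim (fun k => β (Fin.castAdd T k)) (fun n : S => α (n : Fin N)) →
      Set.InjOn v (Finset.univ : Finset (Fin K ⊕ S)) := by
    rintro v rfl x _ y _ hxy
    rcases x with k | n <;> rcases y with k' | n'
    · simp only [Sum.elim_inl] at hxy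
      have := hβ hxy
      have := congrArg Fin.val this
      simp [Fin.ext_iff] at this ⊢
      exact this
    · exact absurd hxy (hβα _ _)
    · exact absurd hxy.symm (hβα _ _)
    · simp only [Sum.elim_inr] at hxy
      have := hα hxy
      exact congrArg Sum.inr (Subtype.ext this)
  have key : ∀ h h' : Fin K → F,
      (PMF.uniformOfFintype (Fin T → F)).map
          (fun z => fun n : S =>
            Polynomial.eval (α n)
              (Lagrange.interpolate Finset.univ β (Fin.append h z)))
        = (PMF.uniformOfFintype (Fin T → F)).map
            (fun z => fun n : S =>
              Polynomial.eval (α n)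
                (Lagrange.interpolate Finset.univ β (Fin.append h' z))) := by
    intro h h'
    set v : Fin K ⊕ S → F := Sum.elim (fun k => β (Fin.castAdd T k)) (fun n : S => α (n : Fin N)) with hvdef
    have hvinj : Set.InjOn v (Finset.univ : Finset (Fin K ⊕ S)) := hv v hvdef
    set r : Fin K ⊕ S → F := Sum.elim (fun k => h' k - h k) (fun _ => 0) with hrdef
    set Q : F[X] := Lagrange.interpolate Finset.univ v r with hQdef
    set c : Fin T → F := fun j => Q.eval (β (Fin.natAdd K j)) with hcdef
    have hcardsum : ((Finset.univ : Finset (Fin K ⊕ S)).card : WithBot ℕ) ≤ ((K + T : ℕ) : WithBot ℕ) := by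
      have : (Finset.univ : Finset (Fin K ⊕ S)).card = K + S.card := by
        simp [Fintype.card_sum]
      rw [this]
      exact_mod_cast Nat.add_le_add_left hS K
    have hQdeg : Q.degree < ((K + T : ℕ) : WithBot ℕ) :=
      lt_of_lt_of_le (Lagrange.degree_interpolate_lt _ hvinj) hcardsum
    have hβinjOn : Set.InjOn β (Finset.univ : Finset (Fin (K+T))) := hβ.injOn
    -- key polynomial identity
    have hcomm : ∀ z : Fin T → F,
        Lagrange.interpolate Finset.univ β (Fin.append h' (z + c))
          = Lagrange.interpolate Finset.univ β (Fin.append h z) + Q := by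
      intro z
      symm
      apply Lagrange.eq_interpolate_of_eval_eq _ hβinjOn
      · refine lt_of_le_of_lt (degree_add_le _ _) (max_lt ?_ ?_)
        · have := Lagrange.degree_interpolate_lt (Fin.append h z) hβinjOn
          simpa using this
        · simpa using hQdeg
      · intro i _
        refine Fin.addCases ?_ ?_ i
        · intro k
          rw [eval_add]
          rw [Lagrange.eval_interpolate_at_node _ hβinjOn (Finset.mem_univ _)]
          have hQk : Q.eval (β (Fin.castAdd T k)) = h' k - h k := by
            have := Lagrange.eval_interpolate_at_node r hvinj (Finset.mem_univ (Sum.inl k))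
            simpa [hQdef, hvdef, hrdef] using this
          rw [hQk]
          simp [Fin.append_left]
        · intro j
          rw [eval_add]
          rw [Lagrange.eval_interpolate_at_node _ hβinjOn (Finset.mem_univ _)]
          simp [Fin.append_right, hcdef]
    have hvanish : ∀ n : S, Q.eval (α n) = 0 := by
      intro n
      have := Lagrange.eval_interpolate_at_node r hvinj (Finset.mem_univ (Sum.inr n))
      simpa [hQdef, hvdef, hrdef] using this
    have hfun : (fun z => fun n : S =>
            Polynomial.eval (α n)
              (Lagrange.interpolate Finset.univ β (Fin.append h z)))
        = (fun z => fun n : S =>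
            Polynomial.eval (α n)
              (Lagrange.interpolate Finset.univ β (Fin.append h' z)))
          ∘ (fun z : Fin T → F => z + c) := by
      funext z
      funext n
      simp only [Function.comp_apply]
      rw [hcomm z, eval_add, hvanish n, add_zero]
    rw [hfun, ← PMF.map_comp]
    congr 1
    exact uniform_map_equiv (Equiv.addRight c)
  refine ⟨key, ?_⟩
  intro κ
  refine ⟨(PMF.uniformOfFintype (Fin T → F)).map
      (fun z => fun n : S =>
        Polynomial.eval (α n)
          (Lagrange.interpolate Finset.univ β (Fin.append (fun _ => (0:F)) z))), ?_⟩
  congr 1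
  funext h
  rw [key h (fun _ => (0:F))]
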